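/- Let H be a square root of a connected graph G with at least three vertices such that H − S is isomorphic to pK_1 + qK_2 for a set S ⊆ V(G). Then every two distinct S-isolated vertices of H with the same neighborhoods in S are true twins in G. -/

import Mathlib

open SimpleGraph

/-- The closed neighborhood `N_G[v]` of a vertex `v`. -/
def closedNbhd {V : Type*} (G : SimpleGraph V) (v : V) : Set V :=
  insert v (G.neighborSet v)

/-- An ordered pair `(x, y)` is comparable if `N_G[x] ⊆ N_G[y]`. -/
def ComparablePair {V : Type*} (G : SimpleGraph V) (x y : V) : Prop :=
  closedNbhd G x ⊆ closedNbhd G y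

/-- `(x, y) ~mt (z, w)`: matched twins. -/
def MatchedTwins {V : Type*} (G : SimpleGraph V) (x y z w : V) : Prop :=
  closedNbhd G x \ {y} = closedNbhd G z \ {w} ∧
  closedNbhd G y \ {x} = closedNbhd G w \ {z}

/-- `(x, y) ~nt (z, w)`: nested twins. -/
def NestedTwins {V : Type*} (G : SimpleGraph V) (x y z w : V) : Prop :=
  G.neighborSet x \ {y} = G.neighborSet z \ {w} ∧
  closedNbhd G y \ {x} = closedNbhd G w \ {z}

/-- The square `H²` of a graph: two distinct vertices are adjacent iff they are
at distance at most two in `H`. -/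
def squareGraph {V : Type*} (H : SimpleGraph V) : SimpleGraph V where
  Adj u v := u ≠ v ∧ (H.Adj u v ∨ ∃ w, H.Adj u w ∧ H.Adj w v)
  symm := by
    refine ⟨?_⟩
    rintro u v ⟨hne, h⟩
    refine ⟨hne.symm, ?_⟩
    rcases h with h | ⟨w, h1, h2⟩
    · exact Or.inl h.symm
    · exact Or.inr ⟨w, h2.symm, h1.symm⟩
  loopless := ⟨by rintro u ⟨hne, _⟩; exact hne rfl⟩

/-- `F` is (isomorphic to) a disjoint union `pK₁ + qK₂`: it has maximum degree at most
one, `p` vertices of degree zero and `q` edges. -/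
def IsDisjUnionK1K2 {W : Type*} (F : SimpleGraph W) (p q : ℕ) : Prop :=
  (∀ u v w : W, F.Adj u v → F.Adj u w → v = w) ∧
  {v : W | ∀ w, ¬ F.Adj v w}.ncard = p ∧
  F.edgeSet.ncard = q

/-- `ab` is an `S`-matching edge of type 1 in `H`. -/
def Type1Edge {V : Type*} (H : SimpleGraph V) (S : Set V) (a b : V) : Prop :=
  a ∉ S ∧ b ∉ S ∧ H.Adj a b ∧
  H.neighborSet a ∩ S = ∅ ∧ (H.neighborSet b ∩ S).Nonempty

/-- `ab` is an `S`-matching edge of type 2 in `H`. -/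
def Type2Edge {V : Type*} (H : SimpleGraph V) (S : Set V) (a b : V) : Prop :=
  a ∉ S ∧ b ∉ S ∧ H.Adj a b ∧
  (H.neighborSet a ∩ S).Nonempty ∧ (H.neighborSet b ∩ S).Nonempty ∧
  H.neighborSet a ∩ H.neighborSet b ∩ S = ∅

/-- `ab` is an `S`-matching edge of type 3 in `H`. -/
def Type3Edge {V : Type*} (H : SimpleGraph V) (S : Set V) (a b : V) : Prop :=
  a ∉ S ∧ b ∉ S ∧ H.Adj a b ∧
  (H.neighborSet a ∩ H.neighborSet b ∩ S).Nonempty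

theorem stmt9 {V : Type*} [Fintype V] (G H : SimpleGraph V) (S : Set V) (p q : ℕ)
    (hconn : G.Connected) (hcard : 3 ≤ Fintype.card V)
    (hsq : G = squareGraph H)
    (hHS : IsDisjUnionK1K2 (SimpleGraph.induce Sᶜ H) p q)
    (u v : V) (hu : u ∉ S) (hv : v ∉ S) (huv : u ≠ v)
    (hui : ∀ w, w ∉ S → ¬ H.Adj u w) (hvi : ∀ w, w ∉ S → ¬ H.Adj v w)
    (hnb : H.neighborSet u ∩ S = H.neighborSet v ∩ S) :
    closedNbhd G u = closedNbhd G v := by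
  -- H-neighborhoods of u and v coincide
  have hNuS : H.neighborSet u ⊆ S := fun x hx => by
    by_contra hxS; exact hui x hxS hx
  have hNvS : H.neighborSet v ⊆ S := fun x hx => by
    by_contra hxS; exact hvi x hxS hx
  have hNu : H.neighborSet u = H.neighborSet v := by
    have h1 : H.neighborSet u = H.neighborSet u ∩ S := by
      ext x; exact ⟨fun h => ⟨h, hNuS h⟩, fun h => h.1⟩
    have h2 : H.neighborSet v = H.neighborSet v ∩ S := by
      ext x; exact ⟨fun h => ⟨h, hNvS h⟩, fun h => h.1⟩
    rw [h1, h2, hnb]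
  -- u has an H-neighbor
  have hadjG : ∀ a b : V, G.Adj a b ↔ (a ≠ b ∧ (H.Adj a b ∨ ∃ w, H.Adj a w ∧ H.Adj w b)) := by
    intro a b; rw [hsq]; rfl
  have hx : ∃ x : V, x ≠ u := by
    have : Nontrivial V := Fintype.one_lt_card_iff_nontrivial.mp (by omega)
    exact exists_ne u
  obtain ⟨x, hxu⟩ := hx
  have hreach := hconn.preconnected u x
  obtain ⟨w⟩ := hreach
  have hGadj : ∃ y, G.Adj u y := by
    cases w with
    | nil => exact absurd rfl hxu.symm
    | cons h _ => exact ⟨_, h⟩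
  have hs : ∃ s, H.Adj u s := by
    obtain ⟨y, hy⟩ := hGadj
    rw [hadjG] at hy
    rcases hy.2 with h | ⟨w', hw, _⟩
    · exact ⟨y, h⟩
    · exact ⟨w', hw⟩
  obtain ⟨s, hus⟩ := hs
  have hvs : H.Adj v s := by
    have : s ∈ H.neighborSet v := hNu ▸ hus
    exact this
  have hGuv : G.Adj u v := by
    rw [hadjG]
    exact ⟨huv, Or.inr ⟨s, hus, hvs.symm⟩⟩
  -- symmetric subset lemma
  have key : ∀ a b : V, H.neighborSet a = H.neighborSet b → G.Adj a b →
      closedNbhd G a ⊆ closedNbhd G b := by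
    intro a b hN hab x hx
    rcases hx with rfl | hx
    · exact Or.inr hab.symm
    · -- hx : x ∈ G.neighborSet a
      by_cases hxb : x = b
      · exact Or.inl hxb
      · refine Or.inr ?_
        have hax : G.Adj a x := hx
        show G.Adj b x
        rw [hadjG] at hax ⊢
        refine ⟨fun h => hxb (h.symm), ?_⟩
        rcases hax.2 with h | ⟨w', hw1, hw2⟩
        · have : x ∈ H.neighborSet b := hN ▸ h
          exact Or.inl this
        · have : w' ∈ H.neighborSet b := hN ▸ hw1
          exact Or.inr ⟨w', this, hw2⟩
  exact Set.Subset.antisymm (key u v hNu hGuv) (key v u hNu.symm hGuv.symm)
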